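/- Let X be a Dedekind complete Banach lattice having Fatou norm with constant 𝔣 ≥ 1, let ε ≥ 0, and let T : X → X be a positive bounded linear operator that is ε-band preserving. Then there exists a bounded band preserving operator S : X → X with 0 ≤ S ≤ T (that is, S x ≥ 0 and (T − S) x ≥ 0 for every x ≥ 0) and ‖T − S‖ ≤ 4𝔣ε. -/

import Mathlib

/-- `T` is `ε`-band preserving. -/
def IsEpsBandPreserving {X : Type*} [NormedAddCommGroup X] [Lattice X]
    (ε : ℝ) (T : X → X) : Prop :=
  ∀ x y : X, 0 ≤ y → |x| ⊓ y = 0 → ‖|T x| ⊓ y‖ ≤ ε * ‖x‖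

/-- `S` is band preserving (equivalently, `0`-band preserving). -/
def IsBandPreserving {X : Type*} [NormedAddCommGroup X] [Lattice X] (S : X → X) : Prop :=
  ∀ x y : X, 0 ≤ y → |x| ⊓ y = 0 → |S x| ⊓ y = 0

/-- `X` is Dedekind complete: every nonempty set bounded above has a least upper bound. -/
def DedekindComplete (X : Type*) [Lattice X] : Prop :=
  ∀ S : Set X, S.Nonempty → BddAbove S → ∃ s, IsLUB S s

/-- `X` has Fatou norm with constant `f`: for every upward-directed set of nonnegative
elements with least upper bound `s`, `‖s‖ ≤ f * sup of the norms`. -/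
def FatouNorm (X : Type*) [NormedAddCommGroup X] [Lattice X] (f : ℝ) : Prop :=
  ∀ A : Set X, A.Nonempty → (∀ a ∈ A, 0 ≤ a) → DirectedOn (· ≤ ·) A →
    ∀ s, IsLUB A s → ∀ c : ℝ, (∀ a ∈ A, ‖a‖ ≤ c) → ‖s‖ ≤ f * c


open scoped Classical

section Lemmas
variable {X : Type*} [NormedAddCommGroup X] [Lattice X] [HasSolidNorm X] [IsOrderedAddMonoid X]

lemma add_inf_le {a b c : X} (ha : 0 ≤ a) (hb : 0 ≤ b) (hc : 0 ≤ c) :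
    (a + b) ⊓ c ≤ a ⊓ c + b ⊓ c := by
  have h : a ⊓ c + b ⊓ c = ((a + b) ⊓ (a + c)) ⊓ ((c + b) ⊓ (c + c)) := by
    rw [add_inf, inf_add, inf_add]
    ac_rfl
  rw [h]
  refine le_inf (le_inf inf_le_left ?_) (le_inf ?_ ?_)
  · exact le_trans inf_le_right (le_add_of_nonneg_left ha)
  · exact le_trans inf_le_right (le_add_of_nonneg_right hb)
  · exact le_trans inf_le_right (le_add_of_nonneg_left hc)

lemma disj_add {a b c : X} (ha : 0 ≤ a) (hb : 0 ≤ b) (hc : 0 ≤ c)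
    (hab : a ⊓ b = 0) (hac : a ⊓ c = 0) : a ⊓ (b + c) = 0 := by
  refine le_antisymm ?_ (le_inf ha (by positivity))
  calc a ⊓ (b + c) = (b + c) ⊓ a := inf_comm _ _
    _ ≤ b ⊓ a + c ⊓ a := add_inf_le hb hc ha
    _ = 0 := by rw [inf_comm b a, inf_comm c a, hab, hac, add_zero]

lemma disj_sum {κ : Type*} {a : X} (ha : 0 ≤ a) (s : Finset κ) (g : κ → X)
    (hg : ∀ k ∈ s, 0 ≤ g k) (hd : ∀ k ∈ s, a ⊓ g k = 0) : a ⊓ (∑ k ∈ s, g k) = 0 := by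
  classical
  induction s using Finset.induction with
  | empty => simpa using inf_eq_right.2 ha
  | insert _ _ hns ih =>
    rename_i k s
    rw [Finset.sum_insert hns]
    exact disj_add ha (hg k (Finset.mem_insert_self k s))
      (Finset.sum_nonneg fun j hj => hg j (Finset.mem_insert_of_mem hj))
      (hd k (Finset.mem_insert_self k s))
      (ih (fun j hj => hg j (Finset.mem_insert_of_mem hj))
        (fun j hj => hd j (Finset.mem_insert_of_mem hj)))

lemma disj_nsmul {a b : X} (ha : 0 ≤ a) (hb : 0 ≤ b) (hab : a ⊓ b = 0) (n : ℕ) :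
    a ⊓ (n • b) = 0 := by
  induction n with
  | zero => simpa using inf_eq_right.2 ha
  | succ n ih =>
    rw [succ_nsmul]
    exact disj_add ha (nsmul_nonneg hb n) hb ih hab

end Lemmas

section Lub
variable {X : Type*} [NormedAddCommGroup X] [Lattice X] [HasSolidNorm X] [IsOrderedAddMonoid X]

lemma isLUB_translate {A : Set X} {s : X} (h : IsLUB A s) (c : X) :
    IsLUB ((· + c) '' A) (s + c) := by
  constructor
  · rintro _ ⟨a, ha, rfl⟩
    exact add_le_add_left (h.1 ha) c
  · rintro b hb
    have : ∀ a ∈ A, a ≤ b - c := fun a ha => by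
      have := hb ⟨a, ha, rfl⟩
      simpa [le_sub_iff_add_le] using this
    exact le_sub_iff_add_le.1 (h.2 this)

lemma isLUB_inf_dist {A : Set X} {s : X} (h : IsLUB A s) (c : X) :
    IsLUB ((c ⊓ ·) '' A) (c ⊓ s) := by
  constructor
  · rintro _ ⟨a, ha, rfl⟩
    exact inf_le_inf_left c (h.1 ha)
  · rintro b hb
    have key : ∀ a ∈ A, a ≤ b + (s ⊔ c) - c := by
      intro a ha
      have h1 : a ⊓ c ≤ b := hb ⟨a, ha, by rw [inf_comm]⟩
      have h2 : a ⊔ c ≤ s ⊔ c := sup_le_sup_right (h.1 ha) c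
      have h3 : a + c ≤ b + (s ⊔ c) := by
        rw [← inf_add_sup a c]; exact add_le_add h1 h2
      exact le_sub_iff_add_le.2 h3
    have hs : s ≤ b + (s ⊔ c) - c := h.2 key
    have e2 : c ⊓ s = c + s - (s ⊔ c) := by
      rw [sup_comm s c]; exact eq_sub_of_add_eq (inf_add_sup c s)
    rw [e2, sub_le_iff_le_add]
    have h4 : s + c ≤ b + (s ⊔ c) := le_sub_iff_add_le.1 hs
    calc c + s = s + c := add_comm c s
      _ ≤ b + (s ⊔ c) := h4

end Lub

section Smul
variable {X : Type*} [NormedAddCommGroup X] [Lattice X] [HasSolidNorm X] [IsOrderedAddMonoid X] [NormedSpace ℝ X]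

lemma nonneg_of_nsmul_nonneg {y : X} {n : ℕ} (hn : 0 < n) (h : 0 ≤ n • y) : 0 ≤ y := by
  have hd : (n • y⁻) ⊓ (n • y⁺) = 0 := by
    have h1 : y⁺ ⊓ y⁻ = 0 := posPart_inf_negPart_eq_zero y
    have h2 : y⁺ ⊓ (n • y⁻) = 0 := disj_nsmul (posPart_nonneg y) (negPart_nonneg y) h1 n
    have h3 : (n • y⁻) ⊓ y⁺ = 0 := by rw [inf_comm]; exact h2
    exact disj_nsmul (nsmul_nonneg (negPart_nonneg y) n) (posPart_nonneg y) h3 n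
  have hle : n • y⁻ ≤ n • y⁺ := by
    have hy : n • y = n • y⁺ - n • y⁻ := by rw [← smul_sub, posPart_sub_negPart]
    rw [hy] at h
    exact sub_nonneg.1 h
  have hz : n • y⁻ = 0 := by
    have h5 := inf_eq_left.2 hle
    rw [hd] at h5; exact h5.symm
  have hyneg : y⁻ = 0 := by
    obtain ⟨m, rfl⟩ := Nat.exists_eq_succ_of_ne_zero hn.ne'
    have : y⁻ ≤ (m + 1) • y⁻ := by
      rw [succ_nsmul]
      exact le_add_of_nonneg_left (nsmul_nonneg (negPart_nonneg y) m)
    exact le_antisymm (hz ▸ this) (negPart_nonneg y)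
  exact negPart_eq_zero.1 hyneg

lemma rsmul_nonneg {c : ℝ} {x : X} (hc : 0 ≤ c) (hx : 0 ≤ x) : 0 ≤ c • x := by
  -- first for rationals
  have hq : ∀ q : ℚ, 0 ≤ q → 0 ≤ (q : ℝ) • x := by
    intro q hq0
    have hden : 0 < q.den := q.pos
    apply nonneg_of_nsmul_nonneg hden
    have : q.den • ((q : ℝ) • x) = ((q.den : ℝ) * (q : ℝ)) • x := by
      rw [← smul_smul, Nat.cast_smul_eq_nsmul]
    rw [this]
    have hnum : ((q.den : ℝ) * (q : ℝ)) = (q.num : ℝ) := by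
      push_cast
      rw [mul_comm]
      exact_mod_cast Rat.mul_den_eq_num q
    rw [hnum]
    obtain ⟨m, hm⟩ : ∃ m : ℕ, q.num = (m : ℤ) := ⟨q.num.toNat, (Int.toNat_of_nonneg (Rat.num_nonneg.2 hq0)).symm⟩
    rw [hm]
    push_cast
    rw [Nat.cast_smul_eq_nsmul]
    exact nsmul_nonneg hx m
  -- choose rationals tending to c from above
  have hex : ∀ n : ℕ, ∃ q : ℚ, c < q ∧ (q : ℝ) < c + 1 / (n + 1) := by
    intro n
    have h0 : (0:ℝ) < 1 / ((n:ℝ) + 1) := by positivity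
    exact exists_rat_btwn (by linarith)
  choose q hq1 hq2 using hex
  have htend : Filter.Tendsto (fun n : ℕ => ((q n : ℝ))) Filter.atTop (nhds c) := by
    apply tendsto_of_tendsto_of_tendsto_of_le_of_le (g := fun _ => c)
      (h := fun n : ℕ => c + 1 / (n + 1)) tendsto_const_nhds
    · have : Filter.Tendsto (fun n : ℕ => 1 / ((n : ℝ) + 1)) Filter.atTop (nhds 0) :=
        tendsto_one_div_add_atTop_nhds_zero_nat
      simpa using tendsto_const_nhds.add this
    · exact fun n => (hq1 n).le
    · exact fun n => (hq2 n).le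
  have htend2 : Filter.Tendsto (fun n : ℕ => (q n : ℝ) • x) Filter.atTop (nhds (c • x)) :=
    htend.smul tendsto_const_nhds
  have hneg : Filter.Tendsto (fun n : ℕ => ((q n : ℝ) • x)⁻) Filter.atTop (nhds ((c • x)⁻)) :=
    (continuous_negPart.tendsto _).comp htend2
  have hzero : ∀ n, ((q n : ℝ) • x)⁻ = 0 := fun n =>
    negPart_eq_zero.2 (hq ( q n) (by exact_mod_cast (hc.trans (hq1 n).le)))
  have : (c • x)⁻ = 0 := by
    exact tendsto_nhds_unique (hneg.congr hzero) tendsto_const_nhds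
  exact negPart_eq_zero.1 this

lemma rsmul_le_rsmul {c : ℝ} {x y : X} (hc : 0 ≤ c) (h : x ≤ y) : c • x ≤ c • y := by
  have := rsmul_nonneg hc (sub_nonneg.2 h)
  rw [smul_sub] at this
  exact sub_nonneg.1 this

lemma posPart_rsmul {c : ℝ} (hc : 0 ≤ c) (x : X) : (c • x)⁺ = c • x⁺ := by
  rcases eq_or_lt_of_le hc with rfl | hc
  · simp
  refine le_antisymm ?_ ?_
  · rw [posPart]
    refine sup_le (rsmul_le_rsmul hc.le (le_posPart x)) (rsmul_nonneg hc.le (posPart_nonneg x))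
  · have : x⁺ ≤ c⁻¹ • (c • x)⁺ := by
      rw [posPart]
      refine sup_le ?_ ?_
      · have : c⁻¹ • (c • x) ≤ c⁻¹ • (c • x)⁺ := rsmul_le_rsmul (by positivity) (le_posPart (c • x))
        rwa [smul_smul, inv_mul_cancel₀ hc.ne', one_smul] at this
      · exact rsmul_nonneg (by positivity) (posPart_nonneg _)
    have h2 := rsmul_le_rsmul hc.le this
    rwa [smul_smul, mul_inv_cancel₀ hc.ne', one_smul] at h2

lemma isLUB_rsmul {A : Set X} {s : X} (h : IsLUB A s) {c : ℝ} (hc : 0 < c) :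
    IsLUB ((c • ·) '' A) (c • s) := by
  constructor
  · rintro _ ⟨a, ha, rfl⟩
    exact rsmul_le_rsmul hc.le (h.1 ha)
  · rintro b hb
    have : ∀ a ∈ A, a ≤ c⁻¹ • b := by
      intro a ha
      have := rsmul_le_rsmul (inv_nonneg.2 hc.le) (hb ⟨a, ha, rfl⟩)
      rwa [smul_smul, inv_mul_cancel₀ hc.ne', one_smul] at this
    have := rsmul_le_rsmul hc.le (h.2 this)
    rwa [smul_smul, mul_inv_cancel₀ hc.ne', one_smul] at this

end Smul

section Proj
variable {X : Type*} [NormedAddCommGroup X] [Lattice X] [HasSolidNorm X] [IsOrderedAddMonoid X]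

/-- Projection onto the band generated by `e`, defined on the positive cone. -/
noncomputable def bproj (e x : X) : X :=
  if h : ∃ s, IsLUB (Set.range fun n : ℕ => x ⊓ n • e) s then h.choose else 0

lemma bproj_isLUB (hDC : DedekindComplete X) {e x : X} (he : 0 ≤ e) (hx : 0 ≤ x) :
    IsLUB (Set.range fun n : ℕ => x ⊓ n • e) (bproj e x) := by
  have hne : (Set.range fun n : ℕ => x ⊓ n • e).Nonempty := ⟨x ⊓ 0 • e, ⟨0, rfl⟩⟩
  have hbdd : BddAbove (Set.range fun n : ℕ => x ⊓ n • e) := by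
    refine ⟨x, ?_⟩
    rintro _ ⟨n, rfl⟩
    exact inf_le_left
  obtain ⟨s, hs⟩ := hDC _ hne hbdd
  rw [bproj, dif_pos ⟨s, hs⟩]
  exact (Exists.choose_spec (⟨s, hs⟩ : ∃ s, IsLUB _ s))

variable (hDC : DedekindComplete X) {e x y : X}
include hDC

lemma bproj_nonneg (he : 0 ≤ e) (hx : 0 ≤ x) : 0 ≤ bproj e x := by
  have h := bproj_isLUB hDC he hx
  have h0 : x ⊓ (0:ℕ) • e = 0 := by simpa using inf_eq_right.2 hx
  calc (0:X) = x ⊓ (0:ℕ) • e := h0.symm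
    _ ≤ bproj e x := h.1 ⟨0, rfl⟩

lemma bproj_le (he : 0 ≤ e) (hx : 0 ≤ x) : bproj e x ≤ x :=
  (bproj_isLUB hDC he hx).2 (by rintro _ ⟨n, rfl⟩; exact inf_le_left)

lemma bproj_add (he : 0 ≤ e) (hx : 0 ≤ x) (hy : 0 ≤ y) :
    bproj e (x + y) = bproj e x + bproj e y := by
  have hxy := bproj_isLUB hDC he (add_nonneg hx hy)
  have hX := bproj_isLUB hDC he hx
  have hY := bproj_isLUB hDC he hy
  refine le_antisymm ?_ ?_
  · refine hxy.2 ?_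
    rintro _ ⟨n, rfl⟩
    have h1 : (x + y) ⊓ n • e ≤ x ⊓ n • e + y ⊓ n • e :=
      add_inf_le hx hy (nsmul_nonneg he n)
    exact h1.trans (add_le_add (hX.1 ⟨n, rfl⟩) (hY.1 ⟨n, rfl⟩))
  · -- x ⊓ m•e + y ⊓ n•e ≤ (x+y) ⊓ (m+n)•e ≤ bproj e (x+y)
    have key : ∀ m n : ℕ, x ⊓ m • e + y ⊓ n • e ≤ bproj e (x + y) := by
      intro m n
      have h1 : x ⊓ m • e + y ⊓ n • e ≤ (x + y) ⊓ ((m + n) • e) := by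
        refine le_inf (add_le_add inf_le_left inf_le_left) ?_
        rw [add_nsmul]
        exact add_le_add inf_le_right inf_le_right
      exact h1.trans (hxy.1 ⟨m + n, rfl⟩)
    have hstep : ∀ n : ℕ, bproj e x + y ⊓ n • e ≤ bproj e (x + y) := by
      intro n
      have : ∀ m : ℕ, x ⊓ m • e ≤ bproj e (x + y) - y ⊓ n • e := fun m =>
        le_sub_iff_add_le.2 (key m n)
      have := hX.2 (by rintro _ ⟨m, rfl⟩; exact this m)
      exact add_le_of_le_sub_right this
    have : ∀ n : ℕ, y ⊓ n • e ≤ bproj e (x + y) - bproj e x := fun n =>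
      le_sub_iff_add_le.2 (by rw [add_comm]; exact hstep n)
    have := hY.2 (by rintro _ ⟨n, rfl⟩; exact this n)
    rw [add_comm]
    exact add_le_of_le_sub_right this

lemma bproj_disj_of_disj (he : 0 ≤ e) (hx : 0 ≤ x) (hy : 0 ≤ y) (hd : y ⊓ e = 0) :
    bproj e x ⊓ y = 0 := by
  have h := bproj_isLUB hDC he hx
  have h' := isLUB_inf_dist h y
  have hall : ∀ n : ℕ, y ⊓ (x ⊓ n • e) = 0 := by
    intro n
    have h1 : y ⊓ n • e = 0 := disj_nsmul hy he hd n
    refine le_antisymm ?_ (le_inf hy (le_inf hx (nsmul_nonneg he n)))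
    · calc y ⊓ (x ⊓ n • e) ≤ y ⊓ n • e := inf_le_inf_left y inf_le_right
        _ = 0 := h1
  have himg : (y ⊓ ·) '' (Set.range fun n : ℕ => x ⊓ n • e) = {0} := by
    apply subset_antisymm
    · rintro _ ⟨_, ⟨n, rfl⟩, rfl⟩
      exact hall n
    · exact Set.singleton_subset_iff.2 ⟨_, ⟨0, rfl⟩, hall 0⟩
  rw [himg] at h'
  have h5 : y ⊓ bproj e x = 0 := le_antisymm (h'.2 fun z hz => le_of_eq hz) (h'.1 rfl)
  rw [inf_comm]
  exact h5

lemma bproj_compl_disj (he : 0 ≤ e) (hx : 0 ≤ x) :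
    (x - bproj e x) ⊓ e = 0 := by
  have h := bproj_isLUB hDC he hx
  set w := (x - bproj e x) ⊓ e with hw
  have hw0 : 0 ≤ w := le_inf (sub_nonneg.2 (bproj_le hDC he hx)) he
  have keyA : ∀ n : ℕ, x ⊓ n • e + w ≤ bproj e x := by
    intro n
    have h1 : w ≤ x - x ⊓ n • e := by
      calc w ≤ x - bproj e x := inf_le_left
        _ ≤ x - x ⊓ n • e := sub_le_sub_left (h.1 ⟨n, rfl⟩) x
    have h2 : x ⊓ n • e + w ≤ x ⊓ (n + 1) • e := by
      refine le_inf ?_ ?_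
      · calc x ⊓ n • e + w ≤ x ⊓ n • e + (x - x ⊓ n • e) := add_le_add_right h1 _
          _ = x := by abel
      · rw [succ_nsmul]
        exact add_le_add inf_le_right inf_le_right
    exact h2.trans (h.1 ⟨n + 1, rfl⟩)
  have htr := isLUB_translate h w
  have hub : bproj e x + w ≤ bproj e x := by
    refine htr.2 ?_
    rintro _ ⟨_, ⟨n, rfl⟩, rfl⟩
    exact keyA n
  exact le_antisymm ((add_le_iff_nonpos_right _).1 hub) hw0

end Proj

section BP
variable {X : Type*} [NormedAddCommGroup X] [Lattice X] [HasSolidNorm X] [IsOrderedAddMonoid X] [NormedSpace ℝ X]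

lemma rsmul_inf {c : ℝ} (hc : 0 < c) (a b : X) : c • (a ⊓ b) = (c • a) ⊓ (c • b) := by
  refine le_antisymm (le_inf (rsmul_le_rsmul hc.le inf_le_left)
    (rsmul_le_rsmul hc.le inf_le_right)) ?_
  have h : c⁻¹ • ((c • a) ⊓ (c • b)) ≤ a ⊓ b := by
    refine le_inf ?_ ?_
    · have := rsmul_le_rsmul (inv_nonneg.2 hc.le) (inf_le_left (a := c • a) (b := c • b))
      rwa [smul_smul, inv_mul_cancel₀ hc.ne', one_smul] at this
    · have := rsmul_le_rsmul (inv_nonneg.2 hc.le) (inf_le_right (a := c • a) (b := c • b))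
      rwa [smul_smul, inv_mul_cancel₀ hc.ne', one_smul] at this
  have := rsmul_le_rsmul hc.le h
  rwa [smul_smul, mul_inv_cancel₀ hc.ne', one_smul] at this

lemma bproj_zero (hDC : DedekindComplete X) {e : X} (he : 0 ≤ e) : bproj e 0 = 0 := by
  have h := bproj_isLUB hDC he (le_refl (0:X))
  have : (Set.range fun n : ℕ => (0:X) ⊓ n • e) = {0} := by
    apply subset_antisymm
    · rintro _ ⟨n, rfl⟩
      exact inf_eq_left.2 (nsmul_nonneg he n)
    · exact Set.singleton_subset_iff.2 ⟨0, inf_eq_left.2 (nsmul_nonneg he 0)⟩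
  rw [this] at h
  exact le_antisymm (h.2 fun z hz => le_of_eq hz) (h.1 rfl)

lemma bproj_smul (hDC : DedekindComplete X) {e x : X} (he : 0 ≤ e) (hx : 0 ≤ x)
    {c : ℝ} (hc : 0 ≤ c) : bproj e (c • x) = c • bproj e x := by
  rcases eq_or_lt_of_le hc with rfl | hc
  · simpa using bproj_zero hDC he
  have h := bproj_isLUB hDC he hx
  have hcx := bproj_isLUB hDC he (rsmul_nonneg hc.le hx)
  refine IsLUB.unique hcx ?_
  constructor
  · rintro _ ⟨n, rfl⟩
    obtain ⟨m, hm⟩ := exists_nat_ge ((n : ℝ) / c)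
    have hnm : (n : ℝ) ≤ c * m := by
      rw [div_le_iff₀ hc] at hm
      linarith [hm]
    have h1 : (n : ℕ) • e ≤ c • ((m : ℕ) • e) := by
      rw [← Nat.cast_smul_eq_nsmul ℝ n e, ← Nat.cast_smul_eq_nsmul ℝ m e, smul_smul]
      have := rsmul_nonneg (sub_nonneg.2 hnm) he
      rw [sub_smul] at this
      exact sub_nonneg.1 this
    calc (c • x) ⊓ n • e ≤ (c • x) ⊓ (c • (m • e)) :=
          inf_le_inf_left _ h1
      _ = c • (x ⊓ m • e) := (rsmul_inf hc _ _).symm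
      _ ≤ c • bproj e x := rsmul_le_rsmul hc.le (h.1 ⟨m, rfl⟩)
  · intro b hb
    have hkey : ∀ m : ℕ, x ⊓ m • e ≤ c⁻¹ • b := by
      intro m
      obtain ⟨n, hn⟩ := exists_nat_ge (c * m)
      have h1 : c • ((m : ℕ) • e) ≤ (n : ℕ) • e := by
        rw [← Nat.cast_smul_eq_nsmul ℝ n e, ← Nat.cast_smul_eq_nsmul ℝ m e, smul_smul]
        have := rsmul_nonneg (sub_nonneg.2 hn) he
        rw [sub_smul] at this
        exact sub_nonneg.1 this
      have h2 : c • (x ⊓ m • e) ≤ b := by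
        calc c • (x ⊓ m • e) = (c • x) ⊓ (c • (m • e)) := rsmul_inf hc _ _
          _ ≤ (c • x) ⊓ n • e := inf_le_inf_left _ h1
          _ ≤ b := hb ⟨n, rfl⟩
      have := rsmul_le_rsmul (inv_nonneg.2 hc.le) h2
      rwa [smul_smul, inv_mul_cancel₀ hc.ne', one_smul] at this
    have h3 := h.2 (by rintro _ ⟨m, rfl⟩; exact hkey m)
    have := rsmul_le_rsmul hc.le h3
    rwa [smul_smul, mul_inv_cancel₀ hc.ne', one_smul] at this

/-- Abstract band projection (behaviour only specified on the positive cone). -/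
structure IsBP (p : X → X) : Prop where
  nonneg : ∀ x, 0 ≤ x → 0 ≤ p x
  le_self : ∀ x, 0 ≤ x → p x ≤ x
  add : ∀ x y, 0 ≤ x → 0 ≤ y → p (x + y) = p x + p y
  smul : ∀ (c : ℝ) (x : X), 0 ≤ c → 0 ≤ x → p (c • x) = c • p x
  disj : ∀ x y, 0 ≤ x → 0 ≤ y → p x ⊓ (y - p y) = 0

namespace IsBP

variable {p q : X → X}

lemma mono (hp : IsBP p) {x y : X} (hx : 0 ≤ x) (hxy : x ≤ y) : p x ≤ p y := by
  have h : p y = p x + p (y - x) := by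
    rw [← hp.add x (y - x) hx (sub_nonneg.2 hxy)]
    congr 1
    abel
  rw [h]
  exact le_add_of_nonneg_right (hp.nonneg _ (sub_nonneg.2 hxy))

lemma sum (hp : IsBP p) {κ : Type*} (s : Finset κ) (g : κ → X) (hg : ∀ k ∈ s, 0 ≤ g k) :
    p (∑ k ∈ s, g k) = ∑ k ∈ s, p (g k) := by
  classical
  induction s using Finset.induction with
  | empty => simpa using hp.smul 0 0 le_rfl le_rfl |>.trans (by simp)
  | insert _ _ hns ih =>
    rename_i k s
    rw [Finset.sum_insert hns, Finset.sum_insert hns,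
      hp.add _ _ (hg k (Finset.mem_insert_self k s))
        (Finset.sum_nonneg fun j hj => hg j (Finset.mem_insert_of_mem hj)),
      ih (fun j hj => hg j (Finset.mem_insert_of_mem hj))]

lemma zero (hp : IsBP p) : p 0 = 0 := by
  simpa using hp.smul 0 0 le_rfl le_rfl

lemma id : IsBP (fun x : X => x) :=
  ⟨fun _ h => h, fun _ _ => le_rfl, fun _ _ _ _ => rfl, fun _ _ _ _ => rfl,
    fun x _ hx _ => by simpa using inf_eq_right.2 hx⟩

lemma compl (hp : IsBP p) : IsBP (fun x => x - p x) where
  nonneg x hx := sub_nonneg.2 (hp.le_self x hx)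
  le_self x hx := sub_le_self x (hp.nonneg x hx)
  add x y hx hy := by rw [hp.add x y hx hy]; abel
  smul c x hc hx := by rw [hp.smul c x hc hx, smul_sub]
  disj x y hx hy := by
    have := hp.disj y x hy hx
    rw [sub_sub_cancel]
    rw [inf_comm] at this
    exact this

lemma le_of_le_of_disj (hq : IsBP q) {v w : X} (hv : 0 ≤ v) (hw : 0 ≤ w) (hvw : v ≤ w)
    (hd : v ⊓ (w - q w) = 0) : v ≤ q w := by
  have h1 : v = v ⊓ (q w + (w - q w)) := by
    rw [add_sub_cancel]
    exact (inf_eq_left.2 hvw).symm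
  calc v = v ⊓ (q w + (w - q w)) := h1
    _ ≤ v ⊓ q w + v ⊓ (w - q w) := by
        rw [inf_comm v (q w + (w - q w)), inf_comm v (q w), inf_comm v (w - q w)]
        exact add_inf_le (hq.nonneg w hw) (sub_nonneg.2 (hq.le_self w hw)) hv
    _ = v ⊓ q w := by rw [hd, add_zero]
    _ ≤ q w := inf_le_right

lemma commute (hp : IsBP p) (hq : IsBP q) {x : X} (hx : 0 ≤ x) : p (q x) = q (p x) := by
  have key : ∀ {p' q' : X → X}, IsBP p' → IsBP q' → p' (q' x) ≤ q' (p' x) := by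
    intro p' q' hp' hq'
    have hv : 0 ≤ p' (q' x) := hp'.nonneg _ (hq'.nonneg x hx)
    have hvw : p' (q' x) ≤ p' x := hp'.mono (hq'.nonneg x hx) (hq'.le_self x hx)
    refine hq'.le_of_le_of_disj hv (hp'.nonneg x hx) hvw ?_
    have h2 : q' x ⊓ (p' x - q' (p' x)) = 0 := hq'.disj x (p' x) hx (hp'.nonneg x hx)
    refine le_antisymm ?_ (le_inf hv (sub_nonneg.2 (hq'.le_self _ (hp'.nonneg x hx))))
    calc p' (q' x) ⊓ (p' x - q' (p' x)) ≤ q' x ⊓ (p' x - q' (p' x)) :=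
          inf_le_inf_right _ (hp'.le_self _ (hq'.nonneg x hx))
      _ = 0 := h2
  exact le_antisymm (key hp hq) (key hq hp)

lemma comp (hp : IsBP p) (hq : IsBP q) : IsBP (fun x => p (q x)) where
  nonneg x hx := hp.nonneg _ (hq.nonneg x hx)
  le_self x hx := (hp.le_self _ (hq.nonneg x hx)).trans (hq.le_self x hx)
  add x y hx hy := by rw [hq.add x y hx hy, hp.add _ _ (hq.nonneg x hx) (hq.nonneg y hy)]
  smul c x hc hx := by rw [hq.smul c x hc hx, hp.smul c _ hc (hq.nonneg x hx)]
  disj x y hx hy := by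
    have hy' : 0 ≤ p (q y) := hp.nonneg _ (hq.nonneg y hy)
    have h0 : 0 ≤ p (q x) := hp.nonneg _ (hq.nonneg x hx)
    have hsplit : y - p (q y) = (y - q y) + (q y - p (q y)) := by abel
    rw [hsplit]
    refine disj_add h0 (sub_nonneg.2 (hq.le_self y hy))
      (sub_nonneg.2 (hp.le_self _ (hq.nonneg y hy))) ?_ ?_
    · refine le_antisymm ?_ (le_inf h0 (sub_nonneg.2 (hq.le_self y hy)))
      calc p (q x) ⊓ (y - q y) ≤ q x ⊓ (y - q y) :=
            inf_le_inf_right _ (hp.le_self _ (hq.nonneg x hx))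
        _ = 0 := hq.disj x y hx hy
    · exact hp.disj (q x) (q y) (hq.nonneg x hx) (hq.nonneg y hy)

lemma bproj_isBP (hDC : DedekindComplete X) {e : X} (he : 0 ≤ e) : IsBP (fun x => bproj e x) where
  nonneg x hx := bproj_nonneg hDC he hx
  le_self x hx := bproj_le hDC he hx
  add x y hx hy := bproj_add hDC he hx hy
  smul c x hc hx := bproj_smul hDC he hx hc
  disj x y hx hy := by
    have hc := bproj_compl_disj hDC he hy
    exact bproj_disj_of_disj hDC he hx (sub_nonneg.2 (bproj_le hDC he hy)) hc

end IsBP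
end BP

section Ptn
variable {X : Type*} [NormedAddCommGroup X] [Lattice X] [HasSolidNorm X] [IsOrderedAddMonoid X] [NormedSpace ℝ X]

/-- A finite partition of unity consisting of abstract band projections. -/
structure Ptn (X : Type*) [NormedAddCommGroup X] [Lattice X] [HasSolidNorm X] [IsOrderedAddMonoid X] [NormedSpace ℝ X] where
  ι : Type
  fin : Fintype ι
  p : ι → X → X
  bp : ∀ i, IsBP (p i)
  pdisj : ∀ i j, i ≠ j → ∀ x y : X, 0 ≤ x → 0 ≤ y → p i x ⊓ p j y = 0
  total : ∀ x : X, 0 ≤ x → ∑ i ∈ (@Finset.univ _ fin), p i x = x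

attribute [instance] Ptn.fin

/-- The trivial partition. -/
def Ptn.triv (X : Type*) [NormedAddCommGroup X] [Lattice X] [HasSolidNorm X] [IsOrderedAddMonoid X] [NormedSpace ℝ X] : Ptn X where
  ι := PUnit
  fin := inferInstance
  p := fun _ x => x
  bp := fun _ => IsBP.id
  pdisj := fun i j hij => absurd rfl hij
  total := fun x _ => by simp

/-- The common refinement of two partitions. -/
def Ptn.prod (π σ : Ptn X) : Ptn X where
  ι := π.ι × σ.ι
  fin := inferInstance
  p := fun ij x => π.p ij.1 (σ.p ij.2 x)
  bp := fun ij => (π.bp ij.1).comp (σ.bp ij.2)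
  pdisj := by
    rintro ⟨i, j⟩ ⟨i', j'⟩ hne x y hx hy
    by_cases hii : i = i'
    · subst hii
      have hjj : j ≠ j' := fun h => hne (by rw [h])
      have h0 : σ.p j x ⊓ σ.p j' y = 0 := σ.pdisj j j' hjj x y hx hy
      refine le_antisymm ?_ (le_inf ((π.bp i).nonneg _ ((σ.bp j).nonneg x hx))
        ((π.bp i).nonneg _ ((σ.bp j').nonneg y hy)))
      calc π.p i (σ.p j x) ⊓ π.p i (σ.p j' y)
          ≤ σ.p j x ⊓ σ.p j' y :=
            inf_le_inf ((π.bp i).le_self _ ((σ.bp j).nonneg x hx))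
              ((π.bp i).le_self _ ((σ.bp j').nonneg y hy))
        _ = 0 := h0
    · exact π.pdisj i i' hii _ _ ((σ.bp j).nonneg x hx) ((σ.bp j').nonneg y hy)
  total := by
    intro x hx
    rw [Fintype.sum_prod_type]
    have h1 : ∀ i, ∑ j, π.p i (σ.p j x) = π.p i x := by
      intro i
      rw [← (π.bp i).sum Finset.univ _ (fun j _ => (σ.bp j).nonneg x hx), σ.total x hx]
    rw [Finset.sum_congr rfl fun i _ => h1 i, π.total x hx]

variable (T : X →L[ℝ] X)

/-- The "block diagonal" part of `T` along a partition. -/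
def Dop (π : Ptn X) (z : X) : X := ∑ i, π.p i (T (π.p i z))

variable {T} (hTpos : ∀ x : X, 0 ≤ x → 0 ≤ T x)
include hTpos

lemma Tmono {x y : X} (h : x ≤ y) : T x ≤ T y := by
  have := hTpos _ (sub_nonneg.2 h)
  rw [map_sub] at this
  exact sub_nonneg.1 this

lemma Dop_nonneg (π : Ptn X) {z : X} (hz : 0 ≤ z) : 0 ≤ Dop T π z :=
  Finset.sum_nonneg fun i _ => (π.bp i).nonneg _ (hTpos _ ((π.bp i).nonneg z hz))

lemma Dop_le (π : Ptn X) {z : X} (hz : 0 ≤ z) : Dop T π z ≤ T z := by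
  have h1 : ∀ i : π.ι, π.p i (T (π.p i z)) ≤ π.p i (T z) := fun i =>
    (π.bp i).mono (hTpos _ ((π.bp i).nonneg z hz)) (Tmono hTpos ((π.bp i).le_self z hz))
  calc Dop T π z ≤ ∑ i, π.p i (T z) := Finset.sum_le_sum fun i _ => h1 i
    _ = T z := π.total _ (hTpos z hz)

lemma Dop_add (π : Ptn X) {x y : X} (hx : 0 ≤ x) (hy : 0 ≤ y) :
    Dop T π (x + y) = Dop T π x + Dop T π y := by
  rw [Dop, Dop, Dop, ← Finset.sum_add_distrib]
  refine Finset.sum_congr rfl fun i _ => ?_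
  rw [(π.bp i).add x y hx hy, map_add,
    (π.bp i).add _ _ (hTpos _ ((π.bp i).nonneg x hx)) (hTpos _ ((π.bp i).nonneg y hy))]

lemma Dop_smul (π : Ptn X) {z : X} (hz : 0 ≤ z) {c : ℝ} (hc : 0 ≤ c) :
    Dop T π (c • z) = c • Dop T π z := by
  rw [Dop, Dop, Finset.smul_sum]
  refine Finset.sum_congr rfl fun i _ => ?_
  rw [(π.bp i).smul c z hc hz, map_smul,
    (π.bp i).smul c _ hc (hTpos _ ((π.bp i).nonneg z hz))]

lemma Dop_prod_le_left (π σ : Ptn X) {z : X} (hz : 0 ≤ z) :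
    Dop T (π.prod σ) z ≤ Dop T π z := by
  have hDπ : Dop T π z = ∑ i, ∑ j, π.p i (T (σ.p j (π.p i z))) := by
    refine Finset.sum_congr rfl fun i _ => ?_
    have h1 : T (π.p i z) = ∑ j, T (σ.p j (π.p i z)) := by
      rw [← map_sum, σ.total _ ((π.bp i).nonneg z hz)]
    rw [h1, (π.bp i).sum Finset.univ _ (fun j _ => hTpos _ ((σ.bp j).nonneg _ ((π.bp i).nonneg z hz)))]
  rw [hDπ]
  show ∑ ij : π.ι × σ.ι, π.p ij.1 (σ.p ij.2 (T (π.p ij.1 (σ.p ij.2 z)))) ≤ _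
  rw [Fintype.sum_prod_type]
  refine Finset.sum_le_sum fun i _ => Finset.sum_le_sum fun j _ => ?_
  have hcomm : π.p i (σ.p j z) = σ.p j (π.p i z) := (π.bp i).commute (σ.bp j) hz
  show π.p i (σ.p j (T (π.p i (σ.p j z)))) ≤ π.p i (T (σ.p j (π.p i z)))
  rw [← hcomm]
  have harg : 0 ≤ T (π.p i (σ.p j z)) := hTpos _ ((π.bp i).nonneg _ ((σ.bp j).nonneg z hz))
  exact (π.bp i).mono ((σ.bp j).nonneg _ harg) ((σ.bp j).le_self _ harg)

lemma Dop_prod_le_right (π σ : Ptn X) {z : X} (hz : 0 ≤ z) :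
    Dop T (π.prod σ) z ≤ Dop T σ z := by
  have hDσ : Dop T σ z = ∑ j, ∑ i, σ.p j (T (π.p i (σ.p j z))) := by
    refine Finset.sum_congr rfl fun j _ => ?_
    have h1 : T (σ.p j z) = ∑ i, T (π.p i (σ.p j z)) := by
      rw [← map_sum, π.total _ ((σ.bp j).nonneg z hz)]
    rw [h1, (σ.bp j).sum Finset.univ _ (fun i _ => hTpos _ ((π.bp i).nonneg _ ((σ.bp j).nonneg z hz)))]
  rw [hDσ]
  show ∑ ij : π.ι × σ.ι, π.p ij.1 (σ.p ij.2 (T (π.p ij.1 (σ.p ij.2 z)))) ≤ _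
  rw [Fintype.sum_prod_type, Finset.sum_comm]
  refine Finset.sum_le_sum fun j _ => Finset.sum_le_sum fun i _ => ?_
  have harg : 0 ≤ T (π.p i (σ.p j z)) := hTpos _ ((π.bp i).nonneg _ ((σ.bp j).nonneg z hz))
  have hcomm : π.p i (σ.p j (T (π.p i (σ.p j z)))) = σ.p j (π.p i (T (π.p i (σ.p j z)))) :=
    (π.bp i).commute (σ.bp j) harg
  show π.p i (σ.p j (T (π.p i (σ.p j z)))) ≤ σ.p j (T (π.p i (σ.p j z)))
  rw [hcomm]
  exact (σ.bp j).mono ((π.bp i).nonneg _ harg) ((π.bp i).le_self _ harg)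

end Ptn

section Avg
variable {X : Type*} [NormedAddCommGroup X] [Lattice X] [HasSolidNorm X] [IsOrderedAddMonoid X] [NormedSpace ℝ X]

lemma norm_mono {a b : X} (ha : 0 ≤ a) (hab : a ≤ b) : ‖a‖ ≤ ‖b‖ :=
  HasSolidNorm.solid (by rw [abs_of_nonneg ha, abs_of_nonneg (ha.trans hab)]; exact hab)

open Finset in
lemma count_filter_mem_not_mem {ι : Type*} [Fintype ι] [DecidableEq ι] {i k : ι} (hik : i ≠ k) :
    ((univ : Finset (Finset ι)).filter fun A => i ∈ A ∧ k ∉ A).card =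
      2 ^ (Fintype.card ι - 2) := by
  have hcard : (((univ : Finset ι).erase i).erase k).card = Fintype.card ι - 2 := by
    rw [card_erase_of_mem (mem_erase.2 ⟨hik.symm, mem_univ k⟩), card_erase_of_mem (mem_univ i),
      card_univ]
    omega
  rw [← hcard, ← card_powerset]
  apply card_nbij' (fun A => A.erase i) (fun B => insert i B)
  · intro A hA
    simp only [mem_coe, mem_filter, mem_univ, true_and] at hA
    rw [mem_coe, mem_powerset]
    intro x hx
    rw [mem_erase] at hx
    refine mem_erase.2 ⟨?_, mem_erase.2 ⟨hx.1, mem_univ x⟩⟩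
    rintro rfl
    exact hA.2 hx.2
  · intro B hB
    rw [mem_coe, mem_powerset] at hB
    simp only [mem_coe, mem_filter, mem_univ, true_and]
    refine ⟨mem_insert_self i B, ?_⟩
    intro hk
    rcases mem_insert.1 hk with h | h
    · exact hik h.symm
    · exact absurd rfl (mem_erase.1 (hB h)).1
  · intro A hA
    simp only [mem_coe, mem_filter, mem_univ, true_and] at hA
    exact insert_erase hA.1
  · intro B hB
    rw [mem_coe, mem_powerset] at hB
    refine erase_insert fun hi => ?_
    exact absurd rfl (mem_erase.1 (mem_erase.1 (hB hi)).2).1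

variable {T : X →L[ℝ] X} (hTpos : ∀ x : X, 0 ≤ x → 0 ≤ T x)
include hTpos

open Finset in
lemma Dop_err_bound {ε : ℝ} (hε : 0 ≤ ε) (hT : IsEpsBandPreserving ε ⇑T)
    (π : Ptn X) {z : X} (hz : 0 ≤ z) :
    ‖T z - Dop T π z‖ ≤ 4 * ε * ‖z‖ := by
  classical
  set t : π.ι → π.ι → X := fun i k => π.p i (T (π.p k z)) with ht
  have htn : ∀ i k, 0 ≤ t i k := fun i k => (π.bp i).nonneg _ (hTpos _ ((π.bp k).nonneg z hz))
  -- Step 1 : error as an off-diagonal sum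
  have hW : T z - Dop T π z = ∑ i, ∑ k ∈ univ.erase i, t i k := by
    have h1 : T z = ∑ i, ∑ k, t i k := by
      have h2 : T z = ∑ i, π.p i (T z) := (π.total _ (hTpos z hz)).symm
      have h3 : ∀ i : π.ι, π.p i (T z) = ∑ k, t i k := by
        intro i
        have h4 : T z = ∑ k, T (π.p k z) := by rw [← map_sum, π.total z hz]
        rw [h4, (π.bp i).sum univ _ fun k _ => hTpos _ ((π.bp k).nonneg z hz)]
      rw [h2]
      exact Finset.sum_congr rfl fun i _ => h3 i
    have h5 : ∀ i : π.ι, ∑ k ∈ univ.erase i, t i k = ∑ k, t i k - t i i := by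
      intro i
      rw [← Finset.add_sum_erase univ (t i) (mem_univ i)]
      abel
    rw [h1, Dop, Finset.sum_congr rfl fun i (_ : i ∈ univ) => h5 i, Finset.sum_sub_distrib]
  -- Step 2 : per-cut estimate
  set g : Finset π.ι → X := fun A => ∑ i ∈ A, π.p i (T (∑ k ∈ univ \ A, π.p k z)) with hg
  have hu0 : ∀ A : Finset π.ι, 0 ≤ ∑ k ∈ univ \ A, π.p k z := fun A =>
    Finset.sum_nonneg fun k _ => (π.bp k).nonneg z hz
  have hg0 : ∀ A, 0 ≤ g A := fun A =>
    Finset.sum_nonneg fun i _ => (π.bp i).nonneg _ (hTpos _ (hu0 A))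
  have hgnorm : ∀ A : Finset π.ι, ‖g A‖ ≤ ε * ‖z‖ := by
    intro A
    set u : X := ∑ k ∈ univ \ A, π.p k z with hu
    have huz : u ≤ z := by
      calc u ≤ ∑ k, π.p k z :=
            Finset.sum_le_sum_of_subset_of_nonneg (Finset.sdiff_subset)
              (fun k _ _ => (π.bp k).nonneg z hz)
        _ = z := π.total z hz
    have hdisj : |u| ⊓ g A = 0 := by
      rw [abs_of_nonneg (hu0 A)]
      rw [inf_comm]
      refine disj_sum (hg0 A) _ _ (fun k _ => (π.bp k).nonneg z hz) ?_
      intro k hk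
      rw [inf_comm]
      refine disj_sum ((π.bp k).nonneg z hz) _ _
        (fun i _ => (π.bp i).nonneg _ (hTpos _ (hu0 A))) ?_
      intro i hi
      have hik : k ≠ i := by
        rintro rfl
        exact (Finset.mem_sdiff.1 hk).2 hi
      exact π.pdisj k i hik _ _ hz (hTpos _ (hu0 A))
    have hTu : |T u| ⊓ g A = g A := by
      rw [abs_of_nonneg (hTpos _ (hu0 A))]
      refine inf_eq_right.2 ?_
      calc g A ≤ ∑ i, π.p i (T u) :=
            Finset.sum_le_sum_of_subset_of_nonneg (Finset.subset_univ A)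
              (fun i _ _ => (π.bp i).nonneg _ (hTpos _ (hu0 A)))
        _ = T u := π.total _ (hTpos _ (hu0 A))
    have := hT u (g A) (hg0 A) hdisj
    rw [hTu] at this
    refine this.trans ?_
    exact mul_le_mul_of_nonneg_left (norm_mono (hu0 A) huz) hε
  -- Step 3 : averaging identity
  by_cases hn : Fintype.card π.ι < 2
  · have hzero : ∀ i : π.ι, (univ : Finset π.ι).erase i = ∅ := by
      intro i
      have h1 := Finset.card_erase_of_mem (mem_univ i)
      rw [card_univ] at h1
      have h2 : ((univ : Finset π.ι).erase i).card = 0 := by omega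
      exact Finset.card_eq_zero.1 h2
    have hz0 : T z - Dop T π z = 0 := by
      rw [hW]
      refine Finset.sum_eq_zero fun i _ => ?_
      rw [hzero i, Finset.sum_empty]
    rw [hz0, norm_zero]
    positivity
  · push_neg at hn
    set n := Fintype.card π.ι with hndef
    have h6 : ∀ A : Finset π.ι, g A = ∑ i, ∑ k, if i ∈ A ∧ k ∉ A then t i k else 0 := by
      intro A
      have h7 : g A = ∑ i ∈ A, ∑ k ∈ univ \ A, t i k := by
        rw [hg]
        refine Finset.sum_congr rfl fun i _ => ?_
        rw [map_sum, (π.bp i).sum (univ \ A) _ fun k _ => hTpos _ ((π.bp k).nonneg z hz)]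
      rw [h7]
      have h8 : ∀ i : π.ι, ∑ k ∈ univ \ A, t i k = ∑ k, if k ∉ A then t i k else 0 := by
        intro i
        rw [Finset.sdiff_eq_filter, Finset.sum_filter]
      have h9 : ∑ i ∈ A, ∑ k ∈ univ \ A, t i k
          = ∑ i, if i ∈ A then (∑ k, if k ∉ A then t i k else 0) else 0 := by
        rw [← Finset.sum_filter]
        have : (univ : Finset π.ι).filter (· ∈ A) = A := by
          rw [Finset.filter_mem_eq_inter, Finset.univ_inter]
        rw [this]
        exact Finset.sum_congr rfl fun i _ => h8 i
      rw [h9]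
      refine Finset.sum_congr rfl fun i _ => ?_
      by_cases hiA : i ∈ A
      · rw [if_pos hiA]
        refine Finset.sum_congr rfl fun k _ => ?_
        by_cases hkA : k ∉ A
        · rw [if_pos hkA, if_pos ⟨hiA, hkA⟩]
        · rw [if_neg hkA, if_neg (by tauto)]
      · rw [if_neg hiA]
        exact (Finset.sum_eq_zero fun k _ => by rw [if_neg (by tauto)]).symm
    have hsum : ∑ A : Finset π.ι, g A = 2 ^ (n - 2) • (T z - Dop T π z) := by
      rw [Finset.sum_congr rfl fun A (_ : A ∈ univ) => h6 A]
      rw [Finset.sum_comm]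
      have hswap : ∀ i : π.ι, ∑ A : Finset π.ι, ∑ k, (if i ∈ A ∧ k ∉ A then t i k else 0)
          = ∑ k, ∑ A : Finset π.ι, (if i ∈ A ∧ k ∉ A then t i k else 0) :=
        fun i => Finset.sum_comm
      rw [Finset.sum_congr rfl fun i (_ : i ∈ univ) => hswap i]
      have hinner : ∀ i k : π.ι, ∑ A : Finset π.ι, (if i ∈ A ∧ k ∉ A then t i k else 0)
          = if i = k then 0 else 2 ^ (n - 2) • t i k := by
        intro i k
        by_cases hik : i = k
        · subst hik
          rw [if_pos rfl]
          exact Finset.sum_eq_zero fun A _ => by rw [if_neg (by tauto)]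
        · rw [if_neg hik, Finset.sum_ite, Finset.sum_const, Finset.sum_const_zero, add_zero,
            count_filter_mem_not_mem hik]
      rw [Finset.sum_congr rfl fun i (_ : i ∈ univ) =>
        Finset.sum_congr rfl fun k (_ : k ∈ univ) => hinner i k]
      rw [hW, Finset.smul_sum]
      refine Finset.sum_congr rfl fun i _ => ?_
      rw [Finset.smul_sum]
      rw [← Finset.add_sum_erase univ _ (mem_univ i), if_pos rfl, zero_add]
      refine Finset.sum_congr rfl fun k hk => ?_
      rw [if_neg (Finset.mem_erase.1 hk).1.symm]
    -- Step 4 : conclusion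
    have hpos2 : (0:ℝ) < (2:ℝ) ^ (n - 2) := by positivity
    have hw : T z - Dop T π z = ((2:ℝ) ^ (n - 2))⁻¹ • ∑ A : Finset π.ι, g A := by
      rw [hsum, ← Nat.cast_smul_eq_nsmul ℝ, smul_smul]
      rw [Nat.cast_pow, Nat.cast_ofNat, inv_mul_cancel₀ hpos2.ne', one_smul]
    have hnorm1 : ‖∑ A : Finset π.ι, g A‖ ≤ (2:ℝ) ^ n * (ε * ‖z‖) := by
      refine (norm_sum_le _ _).trans ?_
      calc ∑ A : Finset π.ι, ‖g A‖ ≤ ∑ _A : Finset π.ι, ε * ‖z‖ :=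
            Finset.sum_le_sum fun A _ => hgnorm A
        _ = ((univ : Finset (Finset π.ι)).card : ℝ) * (ε * ‖z‖) := by
            rw [Finset.sum_const, nsmul_eq_mul]
        _ = (2:ℝ) ^ n * (ε * ‖z‖) := by
            rw [card_univ, Fintype.card_finset]
            push_cast
            ring
    rw [hw, norm_smul, Real.norm_eq_abs,
      abs_of_pos (show (0:ℝ) < ((2:ℝ) ^ (n - 2))⁻¹ by positivity)]
    have h2n : (2:ℝ) ^ n = (2:ℝ) ^ (n - 2) * 4 := by
      have : n = (n - 2) + 2 := by omega
      rw [this]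
      rw [pow_add]
      norm_num
    calc ((2:ℝ) ^ (n - 2))⁻¹ * ‖∑ A : Finset π.ι, g A‖
        ≤ ((2:ℝ) ^ (n - 2))⁻¹ * ((2:ℝ) ^ n * (ε * ‖z‖)) := by
          exact mul_le_mul_of_nonneg_left hnorm1 (by positivity)
      _ = 4 * ε * ‖z‖ := by
          rw [h2n]
          field_simp

end Avg

section Main
variable {X : Type*} [NormedAddCommGroup X] [Lattice X] [HasSolidNorm X] [IsOrderedAddMonoid X] [NormedSpace ℝ X]

/-- The set of "off-diagonal errors" of `T` at `z`. -/
def WSet (T : X →L[ℝ] X) (z : X) : Set X := {w | ∃ π : Ptn X, w = T z - Dop T π z}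

noncomputable def Rop (T : X →L[ℝ] X) (z : X) : X :=
  if h : ∃ s, IsLUB (WSet T z) s then h.choose else 0

variable {T : X →L[ℝ] X} (hDC : DedekindComplete X) (hTpos : ∀ x : X, 0 ≤ x → 0 ≤ T x)
include hTpos

lemma Dop_triv (z : X) : Dop T (Ptn.triv X) z = T z := by
  rw [Dop]
  exact Finset.sum_eq_single_of_mem PUnit.unit (Finset.mem_univ _) (by intro b _ hb; cases b; simp at hb) 

lemma zero_mem_WSet (z : X) : (0:X) ∈ WSet T z := ⟨Ptn.triv X, by rw [Dop_triv hTpos, sub_self]⟩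

include hDC

lemma Rop_isLUB {z : X} (hz : 0 ≤ z) : IsLUB (WSet T z) (Rop T z) := by
  have hne : (WSet T z).Nonempty := ⟨0, zero_mem_WSet hTpos z⟩
  have hbdd : BddAbove (WSet T z) := by
    refine ⟨T z, ?_⟩
    rintro _ ⟨π, rfl⟩
    exact sub_le_self _ (Dop_nonneg hTpos π hz)
  obtain ⟨s, hs⟩ := hDC _ hne hbdd
  rw [Rop, dif_pos ⟨s, hs⟩]
  exact Exists.choose_spec (⟨s, hs⟩ : ∃ s, IsLUB _ s)

lemma Rop_nonneg {z : X} (hz : 0 ≤ z) : 0 ≤ Rop T z :=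
  (Rop_isLUB hDC hTpos hz).1 (zero_mem_WSet hTpos z)

lemma Rop_le_T {z : X} (hz : 0 ≤ z) : Rop T z ≤ T z :=
  (Rop_isLUB hDC hTpos hz).2 (by rintro _ ⟨π, rfl⟩; exact sub_le_self _ (Dop_nonneg hTpos π hz))

lemma Rop_ge {z : X} (hz : 0 ≤ z) (π : Ptn X) : T z - Dop T π z ≤ Rop T z :=
  (Rop_isLUB hDC hTpos hz).1 ⟨π, rfl⟩

lemma Rop_zero : Rop T 0 = 0 := by
  have h : WSet T 0 = {0} := by
    apply subset_antisymm
    · rintro _ ⟨π, rfl⟩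
      have hD : Dop T π 0 = 0 := by
        rw [Dop]
        refine Finset.sum_eq_zero fun i _ => ?_
        rw [(π.bp i).zero, map_zero, (π.bp i).zero]
      rw [hD, map_zero, sub_zero]
      rfl
    · exact Set.singleton_subset_iff.2 (zero_mem_WSet hTpos 0)
  have hL := Rop_isLUB hDC hTpos (le_refl (0:X))
  rw [h] at hL
  exact le_antisymm (hL.2 fun w hw => le_of_eq hw) (hL.1 rfl)

lemma Rop_add {z z' : X} (hz : 0 ≤ z) (hz' : 0 ≤ z') :
    Rop T (z + z') = Rop T z + Rop T z' := by
  have hL := Rop_isLUB hDC hTpos hz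
  have hL' := Rop_isLUB hDC hTpos hz'
  have hLs := Rop_isLUB hDC hTpos (add_nonneg hz hz')
  have hsplit : ∀ π : Ptn X, T (z + z') - Dop T π (z + z') =
      (T z - Dop T π z) + (T z' - Dop T π z') := by
    intro π
    rw [map_add, Dop_add hTpos π hz hz']
    abel
  refine le_antisymm ?_ ?_
  · refine hLs.2 ?_
    rintro _ ⟨π, rfl⟩
    rw [hsplit π]
    exact add_le_add (hL.1 ⟨π, rfl⟩) (hL'.1 ⟨π, rfl⟩)
  · have key : ∀ σ : Ptn X, T z' - Dop T σ z' ≤ Rop T (z + z') - Rop T z := by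
      intro σ
      rw [le_sub_iff_add_le, add_comm]
      have h1 : ∀ π : Ptn X, T z - Dop T π z ≤ Rop T (z + z') - (T z' - Dop T σ z') := by
        intro π
        rw [le_sub_iff_add_le]
        calc (T z - Dop T π z) + (T z' - Dop T σ z')
            ≤ (T z - Dop T (π.prod σ) z) + (T z' - Dop T (π.prod σ) z') :=
              add_le_add (sub_le_sub_left (Dop_prod_le_left hTpos π σ hz) _)
                (sub_le_sub_left (Dop_prod_le_right hTpos π σ hz') _)
          _ = T (z + z') - Dop T (π.prod σ) (z + z') := (hsplit (π.prod σ)).symm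
          _ ≤ Rop T (z + z') := hLs.1 ⟨π.prod σ, rfl⟩
      have h2 : Rop T z ≤ Rop T (z + z') - (T z' - Dop T σ z') :=
        hL.2 (by rintro _ ⟨π, rfl⟩; exact h1 π)
      exact le_sub_iff_add_le.1 h2
    have h3 : Rop T z' ≤ Rop T (z + z') - Rop T z :=
      hL'.2 (by rintro _ ⟨σ, rfl⟩; exact key σ)
    have h3' := le_sub_iff_add_le.1 h3
    calc Rop T z + Rop T z' = Rop T z' + Rop T z := add_comm _ _
      _ ≤ Rop T (z + z') := h3'

lemma Rop_smul {z : X} (hz : 0 ≤ z) {c : ℝ} (hc : 0 ≤ c) :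
    Rop T (c • z) = c • Rop T z := by
  rcases eq_or_lt_of_le hc with rfl | hc
  · rw [zero_smul, zero_smul, Rop_zero hDC hTpos]
  have hcomm : ∀ π : Ptn X, T (c • z) - Dop T π (c • z) = c • (T z - Dop T π z) := by
    intro π
    rw [map_smul, Dop_smul hTpos π hz hc.le, smul_sub]
  have himg : WSet T (c • z) = (c • ·) '' WSet T z := by
    ext w
    constructor
    · rintro ⟨π, rfl⟩
      exact ⟨T z - Dop T π z, ⟨π, rfl⟩, (hcomm π).symm⟩
    · rintro ⟨_, ⟨π, rfl⟩, rfl⟩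
      exact ⟨π, by simpa using (hcomm π).symm⟩
  have h := isLUB_rsmul (Rop_isLUB hDC hTpos hz) hc
  rw [← himg] at h
  exact (Rop_isLUB hDC hTpos (rsmul_nonneg hc.le hz)).unique h

lemma Rop_norm_le {f ε : ℝ} (hε : 0 ≤ ε) (hFatou : FatouNorm X f)
    (hT : IsEpsBandPreserving ε ⇑T) {z : X} (hz : 0 ≤ z) :
    ‖Rop T z‖ ≤ f * (4 * ε * ‖z‖) := by
  refine hFatou (WSet T z) ⟨0, zero_mem_WSet hTpos z⟩ ?_ ?_ _ (Rop_isLUB hDC hTpos hz) _ ?_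
  · rintro _ ⟨π, rfl⟩
    exact sub_nonneg.2 (Dop_le hTpos π hz)
  · rintro _ ⟨π, rfl⟩ _ ⟨σ, rfl⟩
    exact ⟨T z - Dop T (π.prod σ) z, ⟨π.prod σ, rfl⟩,
      sub_le_sub_left (Dop_prod_le_left hTpos π σ hz) _,
      sub_le_sub_left (Dop_prod_le_right hTpos π σ hz) _⟩
  · rintro _ ⟨π, rfl⟩
    exact Dop_err_bound hTpos hε hT π hz

/-- The two-block partition generated by a positive element `e`. -/
noncomputable def pairPtn (hDC : DedekindComplete X) {e : X} (he : 0 ≤ e) : Ptn X where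
  ι := Bool
  fin := inferInstance
  p := fun b x => if b then bproj e x else x - bproj e x
  bp := fun b => by
    cases b
    · simpa using (IsBP.bproj_isBP hDC he).compl
    · simpa using IsBP.bproj_isBP hDC he
  pdisj := by
    intro i j hij x y hx hy
    cases i <;> cases j
    · exact absurd rfl hij
    · rw [inf_comm]
      exact (IsBP.bproj_isBP hDC he).disj y x hy hx
    · exact (IsBP.bproj_isBP hDC he).disj x y hx hy
    · exact absurd rfl hij
  total := fun x _ => by
    rw [Fintype.sum_bool]
    simp

lemma bproj_eq_zero_of_disj {e z : X} (he : 0 ≤ e) (hz : 0 ≤ z) (hd : z ⊓ e = 0) :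
    bproj e z = 0 := by
  have h := bproj_isLUB hDC he hz
  have hset : (Set.range fun n : ℕ => z ⊓ n • e) = {0} := by
    apply subset_antisymm
    · rintro _ ⟨n, rfl⟩
      exact disj_nsmul hz he hd n
    · exact Set.singleton_subset_iff.2 ⟨0, disj_nsmul hz he hd 0⟩
  rw [hset] at h
  exact le_antisymm (h.2 fun w hw => le_of_eq hw) (h.1 rfl)

lemma Sop_band {z y : X} (hz : 0 ≤ z) (hy : 0 ≤ y) (hd : z ⊓ y = 0) :
    (T z - Rop T z) ⊓ y = 0 := by
  have hDpair : Dop T (pairPtn hDC hy) z = T z - bproj y (T z) := by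
    rw [Dop]
    show ∑ b : Bool, (pairPtn hDC hy).p b (T ((pairPtn hDC hy).p b z)) = _
    rw [Fintype.sum_bool]
    have h1 : (pairPtn hDC hy).p true z = 0 := by
      show bproj y z = 0
      exact bproj_eq_zero_of_disj hDC hTpos hy hz hd
    have h2 : (pairPtn hDC hy).p false z = z := by
      show z - bproj y z = z
      rw [bproj_eq_zero_of_disj hDC hTpos hy hz hd, sub_zero]
    rw [h1, h2, map_zero]
    show bproj y 0 + (T z - bproj y (T z)) = T z - bproj y (T z)
    rw [bproj_zero hDC hy, zero_add]
  have hle : T z - Rop T z ≤ T z - bproj y (T z) := by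
    rw [← hDpair]
    calc T z - Rop T z ≤ T z - (T z - Dop T (pairPtn hDC hy) z) :=
          sub_le_sub_left (Rop_ge hDC hTpos hz (pairPtn hDC hy)) _
      _ = Dop T (pairPtn hDC hy) z := by abel
  have h0 : 0 ≤ T z - Rop T z := sub_nonneg.2 (Rop_le_T hDC hTpos hz)
  refine le_antisymm ?_ (le_inf h0 hy)
  calc (T z - Rop T z) ⊓ y ≤ (T z - bproj y (T z)) ⊓ y := inf_le_inf_right y hle
    _ = 0 := bproj_compl_disj hDC hy (hTpos z hz)

end Main

section Theorem
variable {X : Type*} [NormedAddCommGroup X] [Lattice X] [HasSolidNorm X] [IsOrderedAddMonoid X] [NormedSpace ℝ X]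

lemma negPart_rsmul {c : ℝ} (hc : 0 ≤ c) (x : X) : (c • x)⁻ = c • x⁻ := by
  rw [← posPart_neg, ← smul_neg, posPart_rsmul hc, posPart_neg]

set_option maxHeartbeats 1000000 in
theorem positive_epsBP_approx_by_BP' {X : Type*} [NormedAddCommGroup X] [Lattice X] [HasSolidNorm X] [IsOrderedAddMonoid X]
    [NormedSpace ℝ X] [CompleteSpace X] (hDC : DedekindComplete X)
    (f : ℝ) (hf : 1 ≤ f) (hFatou : FatouNorm X f)
    (ε : ℝ) (hε : 0 ≤ ε) (T : X →L[ℝ] X) (hTpos : ∀ x : X, 0 ≤ x → 0 ≤ T x)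
    (hT : IsEpsBandPreserving ε ⇑T) :
    ∃ S : X →L[ℝ] X, IsBandPreserving ⇑S ∧
      (∀ x : X, 0 ≤ x → 0 ≤ S x ∧ S x ≤ T x) ∧ ‖T - S‖ ≤ 4 * f * ε := by
  classical
  set V : X → X := fun x => Rop T x⁺ - Rop T x⁻ with hV
  have hVadd : ∀ x y : X, V (x + y) = V x + V y := by
    intro x y
    have e1 : (x + y)⁺ - (x + y)⁻ = (x⁺ + y⁺) - (x⁻ + y⁻) := by
      rw [posPart_sub_negPart,
        show (x⁺ + y⁺) - (x⁻ + y⁻) = (x⁺ - x⁻) + (y⁺ - y⁻) by abel,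
        posPart_sub_negPart, posPart_sub_negPart]
    have e2 : (x + y)⁺ + (x⁻ + y⁻) = (x⁺ + y⁺) + (x + y)⁻ :=
      sub_eq_sub_iff_add_eq_add.1 e1
    have e3 : Rop T ((x + y)⁺ + (x⁻ + y⁻)) = Rop T ((x⁺ + y⁺) + (x + y)⁻) := by rw [e2]
    rw [Rop_add hDC hTpos (posPart_nonneg _) (add_nonneg (negPart_nonneg x) (negPart_nonneg y)),
      Rop_add hDC hTpos (add_nonneg (posPart_nonneg x) (posPart_nonneg y)) (negPart_nonneg _),
      Rop_add hDC hTpos (negPart_nonneg x) (negPart_nonneg y),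
      Rop_add hDC hTpos (posPart_nonneg x) (posPart_nonneg y)] at e3
    show Rop T (x + y)⁺ - Rop T (x + y)⁻ =
      (Rop T x⁺ - Rop T x⁻) + (Rop T y⁺ - Rop T y⁻)
    have := sub_eq_sub_iff_add_eq_add.2 e3
    rw [this]
    abel
  have hVsmul : ∀ (c : ℝ) (x : X), V (c • x) = c • V x := by
    intro c x
    rcases le_or_gt 0 c with hc | hc
    · show Rop T (c • x)⁺ - Rop T (c • x)⁻ = c • (Rop T x⁺ - Rop T x⁻)
      rw [posPart_rsmul hc, negPart_rsmul hc,
        Rop_smul hDC hTpos (posPart_nonneg x) hc,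
        Rop_smul hDC hTpos (negPart_nonneg x) hc, smul_sub]
    · have hd : 0 ≤ -c := by linarith
      have h1 : c • x = (-c) • (-x) := by rw [smul_neg, neg_smul, neg_neg]
      show Rop T (c • x)⁺ - Rop T (c • x)⁻ = c • (Rop T x⁺ - Rop T x⁻)
      rw [h1, posPart_rsmul hd, negPart_rsmul hd, posPart_neg, negPart_neg,
        Rop_smul hDC hTpos (negPart_nonneg x) hd,
        Rop_smul hDC hTpos (posPart_nonneg x) hd]
      module
  have hVlin_bound : ∀ x : X, ‖V x‖ ≤ (4 * f * ε) * ‖x‖ := by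
    intro x
    have habs : |V x| ≤ Rop T |x| := by
      have h1 : |V x| ≤ |Rop T x⁺| + |Rop T x⁻| := by
        rw [hV]
        calc |Rop T x⁺ - Rop T x⁻| = |Rop T x⁺ + -(Rop T x⁻)| := by rw [sub_eq_add_neg]
          _ ≤ |Rop T x⁺| + |-(Rop T x⁻)| := abs_add_le _ _
          _ = |Rop T x⁺| + |Rop T x⁻| := by rw [abs_neg]
      rw [abs_of_nonneg (Rop_nonneg hDC hTpos (posPart_nonneg x)),
        abs_of_nonneg (Rop_nonneg hDC hTpos (negPart_nonneg x))] at h1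
      refine h1.trans ?_
      rw [← Rop_add hDC hTpos (posPart_nonneg x) (negPart_nonneg x), posPart_add_negPart]
    have h2 : ‖V x‖ ≤ ‖Rop T |x|‖ := by
      rw [← norm_abs_eq_norm (V x)]
      exact norm_mono (abs_nonneg _) habs
    refine h2.trans ?_
    refine (Rop_norm_le hDC hTpos hε hFatou hT (abs_nonneg x)).trans ?_
    rw [norm_abs_eq_norm]
    ring_nf
    exact le_rfl
  let Vlin : X →ₗ[ℝ] X :=
    { toFun := V, map_add' := hVadd, map_smul' := hVsmul }
  have hVlb : ∀ x : X, ‖Vlin x‖ ≤ (4 * f * ε) * ‖x‖ := hVlin_bound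
  let Vc : X →L[ℝ] X := Vlin.mkContinuous (4 * f * ε) hVlb
  have hVc : ∀ x, Vc x = V x := fun x => rfl
  refine ⟨T - Vc, ?_, ?_, ?_⟩
  · intro x y hy hxy
    have hSx : (T - Vc) x = (T x⁺ - Rop T x⁺) - (T x⁻ - Rop T x⁻) := by
      rw [ContinuousLinearMap.sub_apply, hVc x]
      show T x - (Rop T x⁺ - Rop T x⁻) = _
      rw [show T x = T x⁺ - T x⁻ by rw [← map_sub, posPart_sub_negPart]]
      abel
    have hA : 0 ≤ T x⁺ - Rop T x⁺ := sub_nonneg.2 (Rop_le_T hDC hTpos (posPart_nonneg x))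
    have hB : 0 ≤ T x⁻ - Rop T x⁻ := sub_nonneg.2 (Rop_le_T hDC hTpos (negPart_nonneg x))
    have habs2 : |(T - Vc) x| ≤ T |x| - Rop T |x| := by
      rw [hSx]
      calc |(T x⁺ - Rop T x⁺) - (T x⁻ - Rop T x⁻)|
          ≤ |T x⁺ - Rop T x⁺| + |T x⁻ - Rop T x⁻| := by
            rw [sub_eq_add_neg]
            exact (abs_add_le _ _).trans (by rw [abs_neg])
        _ = (T x⁺ - Rop T x⁺) + (T x⁻ - Rop T x⁻) := by
            rw [abs_of_nonneg hA, abs_of_nonneg hB]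
        _ = T |x| - Rop T |x| := by
            rw [← posPart_add_negPart x, map_add,
              Rop_add hDC hTpos (posPart_nonneg x) (negPart_nonneg x)]
            abel
    refine le_antisymm ?_ (le_inf (abs_nonneg _) hy)
    calc |(T - Vc) x| ⊓ y ≤ (T |x| - Rop T |x|) ⊓ y := inf_le_inf_right y habs2
      _ = 0 := Sop_band hDC hTpos (abs_nonneg x) hy hxy
  · intro x hx
    have hVx : Vc x = Rop T x := by
      rw [hVc x, hV]
      show Rop T x⁺ - Rop T x⁻ = Rop T x
      rw [posPart_eq_self.2 hx, negPart_eq_zero.2 hx, Rop_zero hDC hTpos, sub_zero]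
    constructor
    · show 0 ≤ (T - Vc) x
      rw [ContinuousLinearMap.sub_apply, hVx]
      exact sub_nonneg.2 (Rop_le_T hDC hTpos hx)
    · show (T - Vc) x ≤ T x
      rw [ContinuousLinearMap.sub_apply, hVx]
      exact sub_le_self _ (Rop_nonneg hDC hTpos hx)
  · rw [sub_sub_cancel]
    refine Vlin.mkContinuous_norm_le ?_ hVlb
    have hf0 : (0:ℝ) ≤ f := le_trans zero_le_one hf
    positivity

end Theorem

/-- On a Dedekind complete Banach lattice with Fatou norm (constant `f`), every positive
`ε`-band preserving bounded operator `T` admits a band preserving operator `S` with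
`0 ≤ S ≤ T` and `‖T − S‖ ≤ 4 f ε`. -/
theorem positive_epsBP_approx_by_BP {X : Type*} [NormedAddCommGroup X] [Lattice X] [HasSolidNorm X] [IsOrderedAddMonoid X]
    [NormedSpace ℝ X] [CompleteSpace X] (hDC : DedekindComplete X)
    (f : ℝ) (hf : 1 ≤ f) (hFatou : FatouNorm X f)
    (ε : ℝ) (hε : 0 ≤ ε) (T : X →L[ℝ] X) (hTpos : ∀ x : X, 0 ≤ x → 0 ≤ T x)
    (hT : IsEpsBandPreserving ε ⇑T) :
    ∃ S : X →L[ℝ] X, IsBandPreserving ⇑S ∧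
      (∀ x : X, 0 ≤ x → 0 ≤ S x ∧ S x ≤ T x) ∧ ‖T - S‖ ≤ 4 * f * ε :=
  positive_epsBP_approx_by_BP' hDC f hf hFatou ε hε T hTpos hT
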